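/- The map x: ℂ → ℝ⁷ defined (for λ = 1) by x(z) = (1/D)·(1 - r² - 3r⁴/4 + 4r⁶/9 - r⁸/36, -i(z - z̄)(1 + r⁶/9), (z + z̄)(1 + r⁶/9), -i(z² - z̄²)(1 - r⁴/12), (z² + z̄²)(1 - r⁴/12), -i(r²/2)(z - z̄)(1 + 4r²/3), (r²/2)(z + z̄)(1 + 4r²/3)), where r = |z| and D = 1 + r² + 5r⁴/4 + 4r⁶/9 + r⁸/36, takes values in the unit sphere S⁶ ⊂ ℝ⁷, i.e., |x(z)|² = 1 for all z ∈ ℂ. -/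

import Mathlib

open Complex

/-- The denominator `D = 1 + r² + 5r⁴/4 + 4r⁶/9 + r⁸/36` with `r = |z|`. -/
noncomputable def Dfun (z : ℂ) : ℂ :=
  1 + (‖z‖ : ℂ) ^ 2 + 5 * (‖z‖ : ℂ) ^ 4 / 4
    + 4 * (‖z‖ : ℂ) ^ 6 / 9 + (‖z‖ : ℂ) ^ 8 / 36

/-- The Willmore two-sphere `x : ℂ → ℝ⁷ ⊂ ℂ⁷` (for `λ = 1`). -/
noncomputable def xmap (z : ℂ) : Fin 7 → ℂ :=
  let r : ℂ := (‖z‖ : ℂ)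
  (Dfun z)⁻¹ • ![
    1 - r ^ 2 - 3 * r ^ 4 / 4 + 4 * r ^ 6 / 9 - r ^ 8 / 36,
    -I * (z - (starRingEnd ℂ) z) * (1 + r ^ 6 / 9),
    (z + (starRingEnd ℂ) z) * (1 + r ^ 6 / 9),
    -I * (z ^ 2 - ((starRingEnd ℂ) z) ^ 2) * (1 - r ^ 4 / 12),
    (z ^ 2 + ((starRingEnd ℂ) z) ^ 2) * (1 - r ^ 4 / 12),
    -I * (r ^ 2 / 2) * (z - (starRingEnd ℂ) z) * (1 + 4 * r ^ 2 / 3),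
    (r ^ 2 / 2) * (z + (starRingEnd ℂ) z) * (1 + 4 * r ^ 2 / 3)]

set_option maxHeartbeats 1000000 in
/-- `x` takes values in the unit sphere `S⁶ ⊂ ℝ⁷`: each component is real and
`|x(z)|² = 1` for all `z ∈ ℂ`. -/
theorem xmap_mem_sphere (z : ℂ) :
    (∀ j, (xmap z j).im = 0) ∧ ∑ j, Complex.normSq (xmap z j) = 1 := by
  obtain ⟨a, b⟩ := z
  set z : ℂ := ⟨a, b⟩ with hz
  have hr2 : ‖z‖ ^ 2 = a ^ 2 + b ^ 2 := by
    rw [Complex.sq_norm, Complex.normSq_apply]; ring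
  set s : ℝ := a ^ 2 + b ^ 2 with hs
  have hspow : ∀ n : ℕ, ((‖z‖ : ℂ)) ^ (2 * n) = ((s ^ n : ℝ) : ℂ) := by
    intro n
    rw [pow_mul, ← Complex.ofReal_pow, hr2]
    push_cast; ring
  have hp2 : ((‖z‖ : ℂ)) ^ 2 = ((s : ℝ) : ℂ) := by
    have := hspow 1; simpa using this
  have hp4 : ((‖z‖ : ℂ)) ^ 4 = ((s ^ 2 : ℝ) : ℂ) := hspow 2
  have hp6 : ((‖z‖ : ℂ)) ^ 6 = ((s ^ 3 : ℝ) : ℂ) := hspow 3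
  have hp8 : ((‖z‖ : ℂ)) ^ 8 = ((s ^ 4 : ℝ) : ℂ) := hspow 4
  set d : ℝ := 1 + s + 5 * s ^ 2 / 4 + 4 * s ^ 3 / 9 + s ^ 4 / 36 with hd
  have hdpos : 0 < d := by rw [hd, hs]; positivity
  have hD : Dfun z = ((d : ℝ) : ℂ) := by
    rw [Dfun, hp2, hp4, hp6, hp8, hd]; push_cast; ring
  have h1 : z - (starRingEnd ℂ) z = ((2 * b : ℝ) : ℂ) * I := by
    apply Complex.ext <;> simp [hz] <;> ring_nf
  have h2 : z + (starRingEnd ℂ) z = ((2 * a : ℝ) : ℂ) := by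
    apply Complex.ext <;> simp [hz] <;> ring_nf
  have h3 : z ^ 2 - ((starRingEnd ℂ) z) ^ 2 = ((4 * a * b : ℝ) : ℂ) * I := by
    apply Complex.ext <;> simp [hz, pow_two, Complex.mul_re, Complex.mul_im] <;> ring_nf
  have h4 : z ^ 2 + ((starRingEnd ℂ) z) ^ 2 = ((2 * (a ^ 2 - b ^ 2) : ℝ) : ℂ) := by
    apply Complex.ext <;> simp [hz, pow_two, Complex.mul_re, Complex.mul_im] <;> ring_nf
  have e : xmap z = fun j => ((d⁻¹ * ![1 - s - 3 * s ^ 2 / 4 + 4 * s ^ 3 / 9 - s ^ 4 / 36,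
      2 * b * (1 + s ^ 3 / 9),
      2 * a * (1 + s ^ 3 / 9),
      4 * a * b * (1 - s ^ 2 / 12),
      2 * (a ^ 2 - b ^ 2) * (1 - s ^ 2 / 12),
      s * b * (1 + 4 * s / 3),
      s * a * (1 + 4 * s / 3)] j : ℝ) : ℂ) := by
    funext j
    fin_cases j <;>
      simp only [xmap, hD, Pi.smul_apply, smul_eq_mul, Matrix.cons_val_succ',
        Fin.mk_zero, Matrix.cons_val_zero, hp2, hp4, hp6, hp8, h1, h2, h3, h4] <;>
      push_cast <;>
      ring_nf <;>
      rw [Complex.I_sq] <;>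
      push_cast <;>
      ring
  constructor
  · intro j; rw [e]; exact Complex.ofReal_im _
  · rw [Fin.sum_univ_seven, congrFun e 0, congrFun e 1, congrFun e 2, congrFun e 3,
      congrFun e 4, congrFun e 5, congrFun e 6]
    simp only [show (2:Fin 7) = ⟨2, by norm_num⟩ from rfl,
      show (3:Fin 7) = ⟨3, by norm_num⟩ from rfl, show (4:Fin 7) = ⟨4, by norm_num⟩ from rfl,
      show (5:Fin 7) = ⟨5, by norm_num⟩ from rfl, show (6:Fin 7) = ⟨6, by norm_num⟩ from rfl,
      Matrix.cons_val_succ', Fin.mk_zero, Matrix.cons_val_zero, Matrix.cons_val_one,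
      Matrix.head_cons, Complex.normSq_ofReal]
    have hdne : d ≠ 0 := hdpos.ne'
    have step : ∀ x : ℝ, (d⁻¹ * x) * (d⁻¹ * x) = (x * x) / (d * d) := by
      intro x; field_simp
    rw [step, step, step, step, step, step, step, ← add_div, ← add_div,
      ← add_div, ← add_div, ← add_div, ← add_div,
      div_eq_one_iff_eq (by positivity : d * d ≠ 0)]
    rw [hd, hs]; ring
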